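/- For every integer m ≥ 0, the q-binomial sums S_n = Σ_{k=0}^{⌊n/2⌋} (−1)^k q^{k(k−1)/2} [n−k choose k]_q satisfy: S_{6m} = q^{6m²−m}, S_{6m+1} = q^{6m²+m}, S_{6m+2} = 0, S_{6m+3} = −q^{6m²+5m+1}, S_{6m+4} = −q^{6m²+7m+2}, and S_{6m+5} = 0, as identities in the polynomial ring ℤ[q]. -/

import Mathlib

/-- The Gaussian (q-)binomial coefficient `[n choose k]_q ∈ ℤ[q]`, defined through the
q-Pascal recurrence `[n+1 choose k+1] = [n choose k] + q^{k+1} [n choose k+1]`. -/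
noncomputable def qBinom : ℕ → ℕ → Polynomial ℤ
  | _, 0 => 1
  | 0, _ + 1 => 0
  | n + 1, k + 1 => qBinom n k + Polynomial.X ^ (k + 1) * qBinom n (k + 1)

/-- `S_n = ∑_{k=0}^{⌊n/2⌋} (-1)^k q^{k(k-1)/2} [n-k choose k]_q ∈ ℤ[q]`. -/
noncomputable def qBinomSum (n : ℕ) : Polynomial ℤ :=
  ∑ k ∈ Finset.range (n / 2 + 1),
    (-1) ^ k * Polynomial.X ^ (k * (k - 1) / 2) * qBinom (n - k) k

open Polynomial Finset

lemma qBinom_zero_right (n : ℕ) : qBinom n 0 = 1 := by cases n <;> rfl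
lemma qBinom_succ (n k : ℕ) :
    qBinom (n+1) (k+1) = qBinom n k + X ^ (k + 1) * qBinom n (k + 1) := rfl
lemma qBinom_zero (n : ℕ) : ∀ k, n < k → qBinom n k = 0 := by
  induction n with
  | zero => intro k h; cases k with
    | zero => omega
    | succ k => rfl
  | succ n ih =>
    intro k h
    cases k with
    | zero => omega
    | succ k =>
      rw [qBinom_succ, ih k (by omega), ih (k+1) (by omega)]
      ring
lemma qBinom_self : ∀ n, qBinom n n = 1 := by
  intro n
  induction n with
  | zero => rfl
  | succ n ih => rw [qBinom_succ, ih, qBinom_zero n (n+1) (by omega)]; ring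

lemma qBinom_pascal' : ∀ n k, qBinom (n+1) (k+1) = X^(n-k) * qBinom n k + qBinom n (k+1) := by
  intro n
  induction n with
  | zero =>
    intro k
    cases k with
    | zero => rw [qBinom_succ]; simp [qBinom_zero_right, qBinom_zero 0 1 (by omega)]
    | succ k =>
      rw [qBinom_zero 1 (k+2) (by omega), qBinom_zero 0 (k+1) (by omega),
        qBinom_zero 0 (k+2) (by omega)]
      ring
  | succ n ih =>
    intro k
    cases k with
    | zero =>
      have h1 := ih 0
      have h2 : qBinom (n+1) 1 = qBinom n 0 + X^1 * qBinom n 1 := qBinom_succ n 0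
      have h3 : qBinom (n+2) 1 = qBinom (n+1) 0 + X^1 * qBinom (n+1) 1 := qBinom_succ (n+1) 0
      rw [qBinom_zero_right] at *
      simp only [Nat.sub_zero, Nat.zero_add, zero_add] at *
      linear_combination h3 + X * h1 - h2
    | succ k =>
      rcases Nat.lt_or_ge k n with h | h
      · obtain ⟨j, rfl⟩ : ∃ j, n = k + j + 1 := ⟨n - k - 1, by omega⟩
        have h3 := qBinom_succ (k+j+1+1) (k+1)
        have ihk := ih k
        have ihk1 := ih (k+1)
        have d1 := qBinom_succ (k+j+1) k
        have d2 := qBinom_succ (k+j+1) (k+1)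
        rw [show k+j+1-k = j+1 from by omega] at ihk
        rw [show k+j+1-(k+1) = j from by omega] at ihk1
        rw [show k+j+1+1-(k+1) = j+1 from by omega]
        linear_combination h3 + ihk + X^(k+2) * ihk1 - X^(j+1) * d1 - d2
      · rcases Nat.eq_or_lt_of_le h with rfl | h'
        · rw [qBinom_self, qBinom_self, qBinom_zero (n+1) (n+1+1) (by omega), Nat.sub_self]
          ring
        · rw [qBinom_zero (n+1) (k+2) (by omega), qBinom_zero (n+1) (k+1) (by omega),
            qBinom_zero (n+1+1) (k+1+1) (by omega)]
          ring

noncomputable def T (n : ℕ) : Polynomial ℤ :=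
  ∑ k ∈ Finset.range (n / 2 + 1),
    (-1) ^ k * Polynomial.X ^ (k * (k + 1) / 2) * qBinom (n - k) k

lemma tri (k : ℕ) : k*(k+1)/2 = k*(k-1)/2 + k := by
  cases k with
  | zero => rfl
  | succ k =>
    rw [Nat.add_sub_cancel, show (k+1)*(k+1+1) = (k+1)*k + (k+1)*2 from by ring,
      Nat.add_mul_div_right _ _ (by norm_num)]

lemma tri2 (k : ℕ) : (k+1)*((k+1)+1)/2 = k*(k+1)/2 + (k+1) := by
  rw [tri (k+1), Nat.add_sub_cancel, Nat.mul_comm]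

lemma tri3 (k : ℕ) : (k+1)*((k+1)-1)/2 = k*(k+1)/2 := by
  rw [Nat.add_sub_cancel, Nat.mul_comm]

lemma T_ext (n : ℕ) :
    T (n+1) = ∑ k ∈ Finset.range (n/2 + 1 + 1),
      (-1 : Polynomial ℤ) ^ k * X ^ (k * (k + 1) / 2) * qBinom (n + 1 - k) k := by
  rcases Nat.even_or_odd n with ⟨c, hc⟩ | ⟨c, hc⟩
  · have h : (n+1)/2 + 1 = n/2 + 1 := by omega
    rw [T, h]
    symm
    rw [Finset.sum_range_succ, qBinom_zero (n + 1 - (n/2+1)) (n/2+1) (by omega)]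
    ring
  · have h : (n+1)/2 + 1 = n/2 + 1 + 1 := by omega
    rw [T, h]

lemma S_rec (n : ℕ) : qBinomSum (n+2) = T (n+1) - T n := by
  have hd : (n+2)/2 + 1 = (n/2 + 1) + 1 := by omega
  have hterm : ∀ k ∈ Finset.range (n/2+1),
      (-1 : Polynomial ℤ)^(k+1) * X^((k+1)*((k+1)-1)/2) * qBinom (n+2-(k+1)) (k+1)
        = (-1 : Polynomial ℤ)^(k+1) * X^((k+1)*((k+1)+1)/2) * qBinom (n+1-(k+1)) (k+1)
          - (-1 : Polynomial ℤ)^k * X^(k*(k+1)/2) * qBinom (n-k) k := by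
    intro k hk
    simp only [Finset.mem_range] at hk
    rw [show n+2-(k+1) = (n-k)+1 from by omega, show n+1-(k+1) = n-k from by omega,
      tri3, tri2, qBinom_succ, pow_add]
    ring
  calc qBinomSum (n+2)
      = ∑ k ∈ Finset.range ((n/2+1)+1),
          (-1 : Polynomial ℤ)^k * X^(k*(k-1)/2) * qBinom (n+2-k) k := by
        rw [qBinomSum, hd]
    _ = (∑ k ∈ Finset.range (n/2+1),
          (-1 : Polynomial ℤ)^(k+1) * X^((k+1)*((k+1)-1)/2) * qBinom (n+2-(k+1)) (k+1))
        + (-1 : Polynomial ℤ)^0 * X^(0*(0-1)/2) * qBinom (n+2-0) 0 :=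
        Finset.sum_range_succ' _ _
    _ = (∑ k ∈ Finset.range (n/2+1),
          ((-1 : Polynomial ℤ)^(k+1) * X^((k+1)*((k+1)+1)/2) * qBinom (n+1-(k+1)) (k+1)
           - (-1 : Polynomial ℤ)^k * X^(k*(k+1)/2) * qBinom (n-k) k))
        + (-1 : Polynomial ℤ)^0 * X^(0*(0+1)/2) * qBinom (n+1-0) 0 := by
        rw [Finset.sum_congr rfl hterm, qBinom_zero_right, qBinom_zero_right]
    _ = ((∑ k ∈ Finset.range (n/2+1),
          (-1 : Polynomial ℤ)^(k+1) * X^((k+1)*((k+1)+1)/2) * qBinom (n+1-(k+1)) (k+1))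
        + (-1 : Polynomial ℤ)^0 * X^(0*(0+1)/2) * qBinom (n+1-0) 0)
        - ∑ k ∈ Finset.range (n/2+1),
            (-1 : Polynomial ℤ)^k * X^(k*(k+1)/2) * qBinom (n-k) k := by
        rw [Finset.sum_sub_distrib]; ring
    _ = (∑ k ∈ Finset.range ((n/2+1)+1),
          (-1 : Polynomial ℤ)^k * X^(k*(k+1)/2) * qBinom (n+1-k) k) - T n := by
        refine congrArg₂ (· - ·) ?_ rfl
        exact (Finset.sum_range_succ'
          (fun k => (-1 : Polynomial ℤ)^k * X^(k*(k+1)/2) * qBinom (n+1-k) k) (n/2+1)).symm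
    _ = T (n+1) - T n := by rw [T_ext n]

lemma T_rec (n : ℕ) : T (n+2) = T (n+1) - X^(n+1) * qBinomSum n := by
  have hd : (n+2)/2 + 1 = (n/2 + 1) + 1 := by omega
  have hterm : ∀ k ∈ Finset.range (n/2+1),
      (-1 : Polynomial ℤ)^(k+1) * X^((k+1)*((k+1)+1)/2) * qBinom (n+2-(k+1)) (k+1)
        = (-1 : Polynomial ℤ)^(k+1) * X^((k+1)*((k+1)+1)/2) * qBinom (n+1-(k+1)) (k+1)
          - X^(n+1) * ((-1 : Polynomial ℤ)^k * X^(k*(k-1)/2) * qBinom (n-k) k) := by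
    intro k hk
    simp only [Finset.mem_range] at hk
    rw [show n+2-(k+1) = (n-k)+1 from by omega, show n+1-(k+1) = n-k from by omega,
      qBinom_pascal' (n-k) k, show (n-k)-k = n-2*k from by omega, tri2, tri,
      show n+1 = k + (k+1) + (n - 2*k) from by omega,
      pow_add, pow_add, pow_add, pow_add]
    ring
  calc T (n+2)
      = ∑ k ∈ Finset.range ((n/2+1)+1),
          (-1 : Polynomial ℤ)^k * X^(k*(k+1)/2) * qBinom (n+2-k) k := by
        rw [T, hd]
    _ = (∑ k ∈ Finset.range (n/2+1),
          (-1 : Polynomial ℤ)^(k+1) * X^((k+1)*((k+1)+1)/2) * qBinom (n+2-(k+1)) (k+1))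
        + (-1 : Polynomial ℤ)^0 * X^(0*(0+1)/2) * qBinom (n+2-0) 0 :=
        Finset.sum_range_succ' _ _
    _ = (∑ k ∈ Finset.range (n/2+1),
          ((-1 : Polynomial ℤ)^(k+1) * X^((k+1)*((k+1)+1)/2) * qBinom (n+1-(k+1)) (k+1)
           - X^(n+1) * ((-1 : Polynomial ℤ)^k * X^(k*(k-1)/2) * qBinom (n-k) k)))
        + (-1 : Polynomial ℤ)^0 * X^(0*(0+1)/2) * qBinom (n+1-0) 0 := by
        rw [Finset.sum_congr rfl hterm, qBinom_zero_right, qBinom_zero_right]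
    _ = ((∑ k ∈ Finset.range (n/2+1),
          (-1 : Polynomial ℤ)^(k+1) * X^((k+1)*((k+1)+1)/2) * qBinom (n+1-(k+1)) (k+1))
        + (-1 : Polynomial ℤ)^0 * X^(0*(0+1)/2) * qBinom (n+1-0) 0)
        - X^(n+1) * ∑ k ∈ Finset.range (n/2+1),
            (-1 : Polynomial ℤ)^k * X^(k*(k-1)/2) * qBinom (n-k) k := by
        rw [Finset.sum_sub_distrib, ← Finset.mul_sum]; ring
    _ = (∑ k ∈ Finset.range ((n/2+1)+1),
          (-1 : Polynomial ℤ)^k * X^(k*(k+1)/2) * qBinom (n+1-k) k)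
        - X^(n+1) * qBinomSum n := by
        refine congrArg₂ (· - ·) ?_ rfl
        exact (Finset.sum_range_succ'
          (fun k => (-1 : Polynomial ℤ)^k * X^(k*(k+1)/2) * qBinom (n+1-k) k) (n/2+1)).symm
    _ = T (n+1) - X^(n+1) * qBinomSum n := by rw [T_ext n]

lemma S_rec4 (n : ℕ) : qBinomSum (n+4)
    = qBinomSum (n+3) - X^(n+2) * qBinomSum (n+1) + X^(n+1) * qBinomSum n := by
  have h1 := S_rec (n+2)
  have h2 := S_rec (n+1)
  have h3 := T_rec (n+1)
  have h4 := T_rec n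
  rw [show n+2+2 = n+4 from by omega, show n+2+1 = n+3 from by omega] at h1
  rw [show n+1+2 = n+3 from by omega, show n+1+1 = n+2 from by omega] at h2
  rw [show n+1+2 = n+3 from by omega, show n+1+1 = n+2 from by omega] at h3
  linear_combination h1 - h2 + h3 - h4

lemma S0 : qBinomSum 0 = 1 := by
  rw [qBinomSum]
  norm_num [qBinom_zero_right]

lemma S1 : qBinomSum 1 = 1 := by
  rw [qBinomSum]
  norm_num [qBinom_zero_right]

lemma T0 : T 0 = 1 := by
  rw [T]
  norm_num [qBinom_zero_right]

lemma T1 : T 1 = 1 := by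
  rw [T]
  norm_num [qBinom_zero_right]

lemma S2 : qBinomSum 2 = 0 := by
  have := S_rec 0
  norm_num [T0, T1] at this
  exact this

lemma S3 : qBinomSum 3 = -X := by
  have hT2 : T 2 = 1 - X := by
    have := T_rec 0
    norm_num [T1, S0] at this
    exact this
  have := S_rec 1
  norm_num [hT2, T1] at this
  linear_combination this

lemma T2 : T 2 = 1 - X := by
  have := T_rec 0
  norm_num [T1, S0] at this
  exact this

lemma T3 : T 3 = 1 - X - X^2 := by
  have := T_rec 1
  norm_num [T2, S1] at this
  linear_combination this

lemma S4 : qBinomSum 4 = -X^2 := by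
  have := S_rec 2
  norm_num [T2, T3] at this
  linear_combination this

lemma S5 : qBinomSum 5 = 0 := by
  have hT4 : T 4 = T 3 := by
    have := T_rec 2
    norm_num [S2] at this
    linear_combination this
  have := S_rec 3
  norm_num [hT4] at this
  linear_combination this

lemma step (m : ℕ)
    (h2 : qBinomSum (6*m+2) = 0)
    (h3 : qBinomSum (6*m+3) = -X^(6*m^2+5*m+1))
    (h4 : qBinomSum (6*m+4) = -X^(6*m^2+7*m+2))
    (h5 : qBinomSum (6*m+5) = 0) :
    qBinomSum (6*m+6) = X^(6*m^2+11*m+5) ∧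
    qBinomSum (6*m+7) = X^(6*m^2+13*m+7) ∧
    qBinomSum (6*m+8) = 0 ∧
    qBinomSum (6*m+9) = -X^(6*m^2+17*m+12) ∧
    qBinomSum (6*m+10) = -X^(6*m^2+19*m+15) ∧
    qBinomSum (6*m+11) = 0 := by
  have e6 : qBinomSum (6*m+6) = X^(6*m^2+11*m+5) := by
    have h := S_rec4 (6*m+2)
    rw [show 6*m+2+4 = 6*m+6 from by omega, show 6*m+2+3 = 6*m+5 from by omega,
      show 6*m+2+2 = 6*m+4 from by omega, show 6*m+2+1 = 6*m+3 from by omega] at h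
    rw [h, h2, h3, h5]; ring
  have e7 : qBinomSum (6*m+7) = X^(6*m^2+13*m+7) := by
    have h := S_rec4 (6*m+3)
    rw [show 6*m+3+4 = 6*m+7 from by omega, show 6*m+3+3 = 6*m+6 from by omega,
      show 6*m+3+2 = 6*m+5 from by omega, show 6*m+3+1 = 6*m+4 from by omega] at h
    rw [h, e6, h3, h4]; ring
  have e8 : qBinomSum (6*m+8) = 0 := by
    have h := S_rec4 (6*m+4)
    rw [show 6*m+4+4 = 6*m+8 from by omega, show 6*m+4+3 = 6*m+7 from by omega,
      show 6*m+4+2 = 6*m+6 from by omega, show 6*m+4+1 = 6*m+5 from by omega] at h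
    rw [h, e7, h4, h5]; ring
  have e9 : qBinomSum (6*m+9) = -X^(6*m^2+17*m+12) := by
    have h := S_rec4 (6*m+5)
    rw [show 6*m+5+4 = 6*m+9 from by omega, show 6*m+5+3 = 6*m+8 from by omega,
      show 6*m+5+2 = 6*m+7 from by omega, show 6*m+5+1 = 6*m+6 from by omega] at h
    rw [h, e6, e8, h5]; ring
  have e10 : qBinomSum (6*m+10) = -X^(6*m^2+19*m+15) := by
    have h := S_rec4 (6*m+6)
    rw [show 6*m+6+4 = 6*m+10 from by omega, show 6*m+6+3 = 6*m+9 from by omega,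
      show 6*m+6+2 = 6*m+8 from by omega, show 6*m+6+1 = 6*m+7 from by omega] at h
    rw [h, e6, e7, e9]; ring
  have e11 : qBinomSum (6*m+11) = 0 := by
    have h := S_rec4 (6*m+7)
    rw [show 6*m+7+4 = 6*m+11 from by omega, show 6*m+7+3 = 6*m+10 from by omega,
      show 6*m+7+2 = 6*m+9 from by omega, show 6*m+7+1 = 6*m+8 from by omega] at h
    rw [h, e7, e8, e10]; ring
  exact ⟨e6, e7, e8, e9, e10, e11⟩


/-- 6-periodicity of the q-binomial sums `S_n`: for every `m ≥ 0`,
`S_{6m} = q^{6m²-m}`, `S_{6m+1} = q^{6m²+m}`, `S_{6m+2} = 0`, `S_{6m+3} = -q^{6m²+5m+1}`,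
`S_{6m+4} = -q^{6m²+7m+2}`, `S_{6m+5} = 0` in `ℤ[q]`. -/
theorem qBinomSum_six_periodic (m : ℕ) :
    qBinomSum (6 * m) = Polynomial.X ^ (6 * m ^ 2 - m) ∧
    qBinomSum (6 * m + 1) = Polynomial.X ^ (6 * m ^ 2 + m) ∧
    qBinomSum (6 * m + 2) = 0 ∧
    qBinomSum (6 * m + 3) = -Polynomial.X ^ (6 * m ^ 2 + 5 * m + 1) ∧
    qBinomSum (6 * m + 4) = -Polynomial.X ^ (6 * m ^ 2 + 7 * m + 2) ∧
    qBinomSum (6 * m + 5) = 0 := by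
  induction m with
  | zero =>
    norm_num [S0, S1, S2, S3, S4, S5]
  | succ m ih =>
    obtain ⟨h0, h1, h2, h3, h4, h5⟩ := ih
    obtain ⟨e6, e7, e8, e9, e10, e11⟩ := step m h2 h3 h4 h5
    refine ⟨?_, ?_, ?_, ?_, ?_, ?_⟩
    · rw [show 6*(m+1) = 6*m+6 from by ring,
        show 6*(m+1)^2 - (m+1) = 6*m^2+11*m+5 from by
          rw [show 6*(m+1)^2 = (6*m^2+11*m+5)+(m+1) from by ring, Nat.add_sub_cancel]]
      exact e6
    · rw [show 6*(m+1)+1 = 6*m+7 from by ring,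
        show 6*(m+1)^2 + (m+1) = 6*m^2+13*m+7 from by ring]
      exact e7
    · rw [show 6*(m+1)+2 = 6*m+8 from by ring]
      exact e8
    · rw [show 6*(m+1)+3 = 6*m+9 from by ring,
        show 6*(m+1)^2 + 5*(m+1)+1 = 6*m^2+17*m+12 from by ring]
      exact e9
    · rw [show 6*(m+1)+4 = 6*m+10 from by ring,
        show 6*(m+1)^2 + 7*(m+1)+2 = 6*m^2+19*m+15 from by ring]
      exact e10
    · rw [show 6*(m+1)+5 = 6*m+11 from by ring]
      exact e11
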